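/- Let S_1(z) = 1 - z and S_k(z) = S_{k-1}(z) - z/S_{k-1}(z) for k ≥ 2. Then for every k ≥ 1, S_k(1/(2k)) ≤ (1/(4k))^{1/4}. -/

import Mathlib

open Real Finset

/-- The sequence of functions `S_k`, with `S 1 z = 1 - z` and
`S k z = S (k-1) z - z / S (k-1) z` for `k ≥ 2`.  (`S 0` is junk.) -/
noncomputable def S : ℕ → ℝ → ℝ
  | 0, z => 1 - z
  | 1, z => 1 - z
  | (k + 2), z => S (k + 1) z - z / S (k + 1) z

theorem stmt3 (k : ℕ) (hk : 1 ≤ k) :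
    S k (1 / (2 * k)) ≤ (1 / (4 * (k : ℝ))) ^ ((1 : ℝ) / 4) := by
  have hk0 : (1:ℝ) ≤ (k:ℝ) := by exact_mod_cast hk
  have hkpos : (0:ℝ) < k := by linarith
  set z : ℝ := 1 / (2 * k) with hz
  have hz0 : 0 < z := by positivity
  have hzk : 2 * (k:ℝ) * z = 1 := by rw [hz]; field_simp
  have hz2 : z ≤ 1/2 := by
    rw [hz, div_le_div_iff₀ (by positivity) (by norm_num)]
    nlinarith
  have hrec : ∀ j : ℕ, 1 ≤ j → S (j+1) z = S j z - z / S j z := by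
    intro j hj
    match j, hj with
    | (m+1), _ => rfl
  -- key lower bounds
  have key : ∀ j : ℕ, 1 ≤ j → j ≤ k →
      0 < S j z ∧ 1 - 2*(j:ℝ)*z + z^2 ≤ (S j z)^2 ∧ S j z ≤ 1 - z := by
    intro j hj
    induction j, hj using Nat.le_induction with
    | base =>
      intro _
      have hS1 : S 1 z = 1 - z := rfl
      refine ⟨by rw [hS1]; linarith, ?_, le_of_eq hS1⟩
      rw [hS1]; push_cast; nlinarith
    | succ n hn ih =>
      intro hnk
      obtain ⟨hpos, hsq, hle⟩ := ih (by omega)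
      have hnr : (n:ℝ) + 1 ≤ (k:ℝ) := by exact_mod_cast hnk
      have hsqz : z < (S n z)^2 := by nlinarith
      have hrec' : S (n+1) z = S n z - z / S n z := hrec n hn
      have heq : S (n+1) z = ((S n z)^2 - z) / S n z := by
        rw [hrec']; field_simp
      have hpos' : 0 < S (n+1) z := by
        rw [heq]; exact div_pos (by linarith) hpos
      have hsq' : (S (n+1) z)^2 = (S n z)^2 - 2*z + z^2/(S n z)^2 := by
        rw [hrec']; field_simp; ring
      refine ⟨hpos', ?_, ?_⟩
      · have hq : 0 ≤ z^2/(S n z)^2 := by positivity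
        rw [hsq']; push_cast; nlinarith
      · have : 0 < z / S n z := div_pos hz0 hpos
        rw [hrec']; linarith
  -- antitone
  have anti : ∀ i : ℕ, 1 ≤ i → ∀ j : ℕ, i ≤ j → j ≤ k → S j z ≤ S i z := by
    intro i hi j hij
    induction j, hij using Nat.le_induction with
    | base => intro _; exact le_refl _
    | succ n hn ih =>
      intro hnk
      have h1 := ih (by omega)
      have hpos := (key n (le_trans hi hn) (by omega)).1
      have hrec' : S (n+1) z = S n z - z / S n z := hrec n (le_trans hi hn)
      have : 0 < z / S n z := div_pos hz0 hpos
      linarith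
  have hSk := key k hk le_rfl
  obtain ⟨hxk, hsqk, hlek⟩ := hSk
  -- upper bound
  have ub : ∀ j : ℕ, 1 ≤ j → j ≤ k →
      (S j z)^2 ≤ 1 - 2*(j:ℝ)*z + z^2 + ((j:ℝ)-1)*z^2/(S k z)^2 := by
    intro j hj
    induction j, hj using Nat.le_induction with
    | base =>
      intro _
      have hS1 : S 1 z = 1 - z := rfl
      rw [hS1]; push_cast
      have : ((1:ℝ)-1)*z^2/(S k z)^2 = 0 := by norm_num
      rw [this]; nlinarith
    | succ n hn ih =>
      intro hnk
      have hub := ih (by omega)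
      obtain ⟨hpos, hsq, hle⟩ := key n hn (by omega)
      have hrec' : S (n+1) z = S n z - z / S n z := hrec n hn
      have hsq' : (S (n+1) z)^2 = (S n z)^2 - 2*z + z^2/(S n z)^2 := by
        rw [hrec']; field_simp; ring
      have hmono : S k z ≤ S n z := anti n hn k (by omega) le_rfl
      have hdiv : z^2/(S n z)^2 ≤ z^2/(S k z)^2 := by
        apply div_le_div_of_nonneg_left (by positivity) (by positivity)
        nlinarith
      rw [hsq']; push_cast
      have h2 : (((n:ℝ)+1)-1)*z^2/(S k z)^2
          = ((n:ℝ)-1)*z^2/(S k z)^2 + z^2/(S k z)^2 := by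
        field_simp; ring
      rw [h2]; push_cast at hub; linarith
  have hub := ub k hk le_rfl
  set x := S k z with hxdef
  have hx1 : x ≤ 1 := by linarith
  -- x^2 ≤ z^2 + (k-1) z^2 / x^2
  have h1 : x^2 ≤ z^2 + ((k:ℝ)-1)*z^2/x^2 := by nlinarith
  have h2 : ((k:ℝ)-1)*z^2/x^2 * x^2 = ((k:ℝ)-1)*z^2 := by
    field_simp
  have h4 : x^4 ≤ 1/(4*(k:ℝ)) := by
    have h3 : x^2 * x^2 ≤ (z^2 + ((k:ℝ)-1)*z^2/x^2) * x^2 := by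
      apply mul_le_mul_of_nonneg_right h1 (by positivity)
    rw [add_mul, h2] at h3
    have hkz : (k:ℝ)*z^2 = 1/(4*(k:ℝ)) := by
      rw [hz]; field_simp; ring
    have hx2 : x^2 ≤ 1 := pow_le_one₀ hxk.le hx1
    have hzz : z^2 * x^2 ≤ z^2 * 1 := mul_le_mul_of_nonneg_left hx2 (sq_nonneg z)
    have hx4 : x^4 = x^2 * x^2 := by ring
    have hkz1 : ((k:ℝ)-1) + 1 = k := by ring
    linarith [h3, hzz]
  calc x = (x^4) ^ ((1:ℝ)/4) := by
        rw [← Real.rpow_natCast x 4, ← Real.rpow_mul hxk.le]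
        norm_num
    _ ≤ (1/(4*(k:ℝ))) ^ ((1:ℝ)/4) :=
        Real.rpow_le_rpow (by positivity) h4 (by norm_num)
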